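/- Let L : ℝⁿ → ℝ be a convex function, let E ⊆ ℝⁿ be the (full Lebesgue measure) set of points where L is differentiable, and for ε > 0 and x ∈ ℝⁿ let T_ε(x) = (1/|B(x,ε)|) ∫_{B(x,ε) ∩ E} ∇L(z) dz, where B(x,ε) is the Euclidean ball of center x and radius ε and |B(x,ε)| its Lebesgue volume. Suppose that for every x ∈ ℝⁿ the limit y(x) = lim_{ε → 0⁺} T_ε(x) exists. Then y : ℝⁿ → ℝⁿ is a Borel measurable map and y(x) ∈ ∂L(x) for every x ∈ ℝⁿ. -/

import Mathlib

open MeasureTheory Metric Set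

section Aux

variable {n : ℕ}

lemma grad_ineq {L : EuclideanSpace ℝ (Fin n) → ℝ} (hL : ConvexOn ℝ Set.univ L)
    {w : EuclideanSpace ℝ (Fin n)} (hw : DifferentiableAt ℝ L w) (z : EuclideanSpace ℝ (Fin n)) :
    L w + (inner ℝ (gradient L w) (z - w) : ℝ) ≤ L z := by
  set v := z - w with hv
  have hinner : (inner ℝ (gradient L w) v : ℝ) = fderiv ℝ L w v := by
    rw [gradient]
    exact InnerProductSpace.toDual_symm_apply
  have hc : ∀ t : ℝ, HasDerivAt (fun t : ℝ => w + t • v) v t := by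
    intro t
    simpa using ((hasDerivAt_id t).smul_const v).const_add w
  have hφ : HasDerivAt (fun t : ℝ => L (w + t • v)) (fderiv ℝ L w v) 0 := by
    have h0 : HasFDerivAt L (fderiv ℝ L w) (w + (0:ℝ) • v) := by
      simpa using hw.hasFDerivAt
    exact h0.comp_hasDerivAt 0 (hc 0)
  have hconv : ConvexOn ℝ Set.univ (fun t : ℝ => L (w + t • v)) := by
    have := hL.comp_affineMap (AffineMap.lineMap w z)
    have heq : (L ∘ (AffineMap.lineMap w z)) = fun t : ℝ => L (w + t • v) := by
      funext t; simp [AffineMap.lineMap_apply, hv, add_comm]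
    rw [heq] at this
    simpa using this
  have := hconv.le_slope_of_hasDerivAt (Set.mem_univ (0:ℝ)) (Set.mem_univ (1:ℝ)) zero_lt_one hφ
  rw [slope_def_field] at this
  simp only [zero_smul, add_zero, one_smul] at this
  have h1 : w + v = z := by rw [hv]; abel
  rw [h1] at this
  rw [hinner]
  have : fderiv ℝ L w v ≤ L z - L w := by
    simpa [div_one] using this
  linarith

lemma ae_diff {L : EuclideanSpace ℝ (Fin n) → ℝ} (hL : ConvexOn ℝ Set.univ L) :
    ∀ᵐ w : EuclideanSpace ℝ (Fin n) ∂volume, DifferentiableAt ℝ L w := by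
  have hloc : LocallyLipschitz L := hL.locallyLipschitz
  have key : ∀ x : EuclideanSpace ℝ (Fin n), ∃ u : Set (EuclideanSpace ℝ (Fin n)),
      IsOpen u ∧ x ∈ u ∧ ∀ᵐ w ∂volume, w ∈ u → DifferentiableAt ℝ L w := by
    intro x
    obtain ⟨K, t, ht, hK⟩ := hloc x
    obtain ⟨u, hut, hu, hxu⟩ := _root_.mem_nhds_iff.1 ht
    refine ⟨u, hu, hxu, ?_⟩
    filter_upwards [(hK.mono hut).ae_differentiableWithinAt_of_mem] with w hw hwu
    exact (hw hwu).differentiableAt (hu.mem_nhds hwu)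
  choose u huo hxu hae using key
  obtain ⟨T, hTc, hTu⟩ := TopologicalSpace.isOpen_iUnion_countable u huo
  have hcover : (⋃ i ∈ T, u i) = univ := by
    rw [hTu]; exact eq_univ_of_forall fun x => mem_iUnion.2 ⟨x, hxu x⟩
  have : ∀ᵐ w ∂(volume : Measure (EuclideanSpace ℝ (Fin n))),
      ∀ i ∈ T, w ∈ u i → DifferentiableAt ℝ L w :=
    (ae_ball_iff hTc).2 fun i _ => hae i
  filter_upwards [this] with w hw
  have : w ∈ ⋃ i ∈ T, u i := hcover ▸ mem_univ w
  obtain ⟨i, hiT, hwi⟩ := mem_iUnion₂.1 this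
  exact hw i hiT hwi

lemma meas_grad (L : EuclideanSpace ℝ (Fin n) → ℝ) : Measurable (gradient L) :=
  ((InnerProductSpace.toDual ℝ (EuclideanSpace ℝ (Fin n))).symm.continuous.measurable).comp
    (measurable_fderiv ℝ L)

lemma norm_grad_eq (L : EuclideanSpace ℝ (Fin n) → ℝ) (w : EuclideanSpace ℝ (Fin n)) :
    ‖gradient L w‖ = ‖fderiv ℝ L w‖ := by
  rw [gradient]
  exact LinearIsometryEquiv.norm_map _ _

lemma meas_T (L : EuclideanSpace ℝ (Fin n) → ℝ) (ε : ℝ) :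
    Measurable (fun x : EuclideanSpace ℝ (Fin n) =>
      ∫ z in ball x ε ∩ {z | DifferentiableAt ℝ L z}, gradient L z) := by
  set E := {z : EuclideanSpace ℝ (Fin n) | DifferentiableAt ℝ L z} with hEdef
  have hE : MeasurableSet E := measurableSet_of_differentiableAt ℝ L
  have hg : Measurable (gradient L) := meas_grad L
  have hset : MeasurableSet {p : EuclideanSpace ℝ (Fin n) × EuclideanSpace ℝ (Fin n) |
      p.2 ∈ ball p.1 ε ∩ E} := by
    have h1 : MeasurableSet {p : EuclideanSpace ℝ (Fin n) × EuclideanSpace ℝ (Fin n) |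
        dist p.2 p.1 < ε} :=
      (isOpen_lt (continuous_dist.comp (continuous_snd.prodMk continuous_fst)) continuous_const
        ).measurableSet
    have h2 : MeasurableSet {p : EuclideanSpace ℝ (Fin n) × EuclideanSpace ℝ (Fin n) | p.2 ∈ E} :=
      measurable_snd hE
    exact h1.inter h2
  have sm : StronglyMeasurable (fun p : EuclideanSpace ℝ (Fin n) × EuclideanSpace ℝ (Fin n) =>
      Set.indicator {p : EuclideanSpace ℝ (Fin n) × EuclideanSpace ℝ (Fin n) |
        p.2 ∈ ball p.1 ε ∩ E} (fun q => gradient L q.2) p) :=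
    ((hg.comp measurable_snd).stronglyMeasurable).indicator hset
  have key := sm.integral_prod_right' (ν := (volume : Measure (EuclideanSpace ℝ (Fin n))))
  have heq : (fun x : EuclideanSpace ℝ (Fin n) =>
      ∫ z in ball x ε ∩ E, gradient L z) = fun x => ∫ z,
        Set.indicator {p : EuclideanSpace ℝ (Fin n) × EuclideanSpace ℝ (Fin n) |
          p.2 ∈ ball p.1 ε ∩ E} (fun q => gradient L q.2) (x, z) := by
    funext x
    rw [← integral_indicator (measurableSet_ball.inter hE)]
    rfl
  rw [heq]
  exact key.measurable

end Aux

/-- The subdifferential of `L` at `x`. -/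
def subdiff {n : ℕ} (L : EuclideanSpace ℝ (Fin n) → ℝ) (x : EuclideanSpace ℝ (Fin n)) :
    Set (EuclideanSpace ℝ (Fin n)) :=
  {y | ∀ z, L x + (inner ℝ y (z - x) : ℝ) ≤ L z}

theorem stmt5 {n : ℕ} (L : EuclideanSpace ℝ (Fin n) → ℝ) (hL : ConvexOn ℝ Set.univ L)
    (y : EuclideanSpace ℝ (Fin n) → EuclideanSpace ℝ (Fin n))
    (hy : ∀ x : EuclideanSpace ℝ (Fin n), Filter.Tendsto
      (fun ε : ℝ => (volume (Metric.ball x ε)).toReal⁻¹ •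
        ∫ z in Metric.ball x ε ∩ {z | DifferentiableAt ℝ L z}, gradient L z)
      (nhdsWithin 0 (Set.Ioi 0)) (nhds (y x))) :
    Measurable y ∧ ∀ x, y x ∈ subdiff L x := by
  classical
  set E := {z : EuclideanSpace ℝ (Fin n) | DifferentiableAt ℝ L z} with hEdef
  have hE : MeasurableSet E := measurableSet_of_differentiableAt ℝ L
  have haed : ∀ᵐ w : EuclideanSpace ℝ (Fin n) ∂volume, DifferentiableAt ℝ L w := ae_diff hL
  have hEuniv : E =ᵐ[(volume : Measure (EuclideanSpace ℝ (Fin n)))] Set.univ := by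
    rw [ae_eq_univ]
    simpa [hEdef, ae_iff, Set.compl_setOf] using haed
  have hg : Measurable (gradient L) := meas_grad L
  have hLcont : Continuous L := hL.locallyLipschitz.continuous
  constructor
  · -- measurability
    set f : ℕ → EuclideanSpace ℝ (Fin n) → EuclideanSpace ℝ (Fin n) := fun k x =>
      (volume (ball x (1 / ((k : ℝ) + 1)))).toReal⁻¹ •
        ∫ z in ball x (1 / ((k : ℝ) + 1)) ∩ E, gradient L z with hfdef
    have hfm : ∀ k, Measurable (f k) := by
      intro k
      have hconst : ∀ x : EuclideanSpace ℝ (Fin n),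
          volume (ball x (1 / ((k : ℝ) + 1))) =
          volume (ball (0 : EuclideanSpace ℝ (Fin n)) (1 / ((k : ℝ) + 1))) := fun x =>
        Measure.addHaar_ball_center _ _ _
      have : f k = fun x =>
          (volume (ball (0 : EuclideanSpace ℝ (Fin n)) (1 / ((k : ℝ) + 1)))).toReal⁻¹ •
          ∫ z in ball x (1 / ((k : ℝ) + 1)) ∩ E, gradient L z := by
        funext x; rw [hfdef]; simp only; rw [hconst x]
      rw [this]
      exact Measurable.smul (measurable_const (a := ((volume (ball (0 : EuclideanSpace ℝ (Fin n)) (1 / ((k : ℝ) + 1)))).toReal⁻¹ : ℝ))) (meas_T L _)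
    apply measurable_of_tendsto_metrizable hfm
    rw [tendsto_pi_nhds]
    intro x
    have hu : Filter.Tendsto (fun k : ℕ => 1 / ((k : ℝ) + 1)) Filter.atTop
        (nhdsWithin 0 (Set.Ioi 0)) := by
      apply tendsto_nhdsWithin_of_tendsto_nhds_of_eventually_within
      · exact tendsto_one_div_add_atTop_nhds_zero_nat
      · filter_upwards with k
        exact mem_Ioi.2 (by positivity)
    exact (hy x).comp hu
  · -- subdifferential property
    intro x z
    -- uniform Lipschitz bound near x
    obtain ⟨K, hK⟩ : ∃ K : NNReal, LipschitzOnWith K L (ball x 1) := by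
      have hconv2 : ConvexOn ℝ (ball x 2) L := hL.subset (subset_univ _) (convex_ball _ _)
      have hbd : Bornology.IsBounded (L '' ball x 2) := by
        have hcomp : IsCompact (L '' closedBall x 2) :=
          (isCompact_closedBall x 2).image hLcont
        exact hcomp.isBounded.subset (image_mono ball_subset_closedBall)
      exact hconv2.exists_lipschitzOnWith_of_isBounded (by norm_num) hbd
    have hgbd : ∀ w ∈ ball x 1, ‖gradient L w‖ ≤ (K : ℝ) := by
      intro w hw
      rw [norm_grad_eq]
      exact norm_fderiv_le_of_lipschitzOn ℝ (isOpen_ball.mem_nhds hw) hK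
    -- notation
    set l := nhdsWithin (0:ℝ) (Set.Ioi 0) with hldef
    set V : ℝ → ℝ := fun ε => (volume (ball x ε)).toReal with hVdef
    have hVpos : ∀ ε : ℝ, 0 < ε → 0 < V ε := fun ε hε =>
      ENNReal.toReal_pos (measure_ball_pos volume x hε).ne' measure_ball_lt_top.ne
    -- integrabilities
    have hintL : ∀ ε : ℝ, IntegrableOn L (ball x ε) volume := fun ε =>
      ((hLcont.continuousOn).integrableOn_compact (isCompact_closedBall x ε)).mono_set
        ball_subset_closedBall
    have hintg : ∀ ε ∈ Set.Ioc (0:ℝ) 1, IntegrableOn (gradient L) (ball x ε) volume := by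
      intro ε hε
      apply Measure.integrableOn_of_bounded measure_ball_lt_top.ne
        hg.aestronglyMeasurable (M := (K : ℝ))
      filter_upwards [ae_restrict_mem measurableSet_ball] with w hw
      exact hgbd w (ball_subset_ball hε.2 hw)
    have hint2 : ∀ ε ∈ Set.Ioc (0:ℝ) 1,
        IntegrableOn (fun w => (inner ℝ (gradient L w) (z - x) : ℝ)) (ball x ε) volume := by
      intro ε hε
      apply Measure.integrableOn_of_bounded measure_ball_lt_top.ne
        (hg.inner measurable_const).aestronglyMeasurable (M := (K : ℝ) * ‖z - x‖)
      filter_upwards [ae_restrict_mem measurableSet_ball] with w hw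
      calc ‖(inner ℝ (gradient L w) (z - x) : ℝ)‖ ≤ ‖gradient L w‖ * ‖z - x‖ :=
            norm_inner_le_norm _ _
        _ ≤ (K : ℝ) * ‖z - x‖ := by
            have := hgbd w (ball_subset_ball hε.2 hw)
            exact mul_le_mul_of_nonneg_right this (norm_nonneg _)
    have hint3 : ∀ ε ∈ Set.Ioc (0:ℝ) 1,
        IntegrableOn (fun w => (inner ℝ (gradient L w) (x - w) : ℝ)) (ball x ε) volume := by
      intro ε hε
      apply Measure.integrableOn_of_bounded measure_ball_lt_top.ne
        (hg.inner (measurable_const.sub measurable_id)).aestronglyMeasurable (M := (K : ℝ) * 1)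
      filter_upwards [ae_restrict_mem measurableSet_ball] with w hw
      calc ‖(inner ℝ (gradient L w) (x - w) : ℝ)‖ ≤ ‖gradient L w‖ * ‖x - w‖ :=
            norm_inner_le_norm _ _
        _ ≤ (K : ℝ) * 1 := by
            apply mul_le_mul (hgbd w (ball_subset_ball hε.2 hw)) _ (norm_nonneg _)
              (NNReal.coe_nonneg K)
            have : dist x w < ε := by rw [dist_comm]; exact mem_ball.1 hw
            rw [← dist_eq_norm]
            linarith [hε.2]
    -- the three quantities
    set Φ₁ : ℝ → ℝ := fun ε => (V ε)⁻¹ * ∫ w in ball x ε, L w with hΦ₁def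
    set Φ₂ : ℝ → EuclideanSpace ℝ (Fin n) := fun ε =>
      (V ε)⁻¹ • ∫ w in ball x ε, gradient L w with hΦ₂def
    set Φ₃ : ℝ → ℝ := fun ε =>
      (V ε)⁻¹ * ∫ w in ball x ε, (inner ℝ (gradient L w) (x - w) : ℝ) with hΦ₃def
    -- limit of Φ₂
    have h2 : Filter.Tendsto Φ₂ l (nhds (y x)) := by
      have heq : ∀ ε : ℝ, (∫ z in ball x ε ∩ E, gradient L z) = ∫ w in ball x ε, gradient L w := by
        intro ε
        apply setIntegral_congr_set
        have := Filter.EventuallyEq.inter (Filter.EventuallyEq.refl (ae volume) (ball x ε)) hEuniv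
        rwa [inter_univ] at this
      have := hy x
      simp only [heq] at this
      exact this
    -- limit of Φ₁
    have h1 : Filter.Tendsto Φ₁ l (nhds (L x)) := by
      rw [Metric.tendsto_nhds]
      intro δ hδ
      obtain ⟨r, hr, hcont⟩ := Metric.continuousAt_iff.1 hLcont.continuousAt (δ/2) (by linarith)
      have hmem : Set.Ioo (0:ℝ) r ∈ l := Ioo_mem_nhdsGT_of_mem ⟨le_refl 0, hr⟩
      filter_upwards [hmem] with ε hε
      have hεpos : 0 < ε := hε.1
      have hV := hVpos ε hεpos
      have hbound : ∀ w ∈ ball x ε, ‖L w - L x‖ ≤ δ/2 := by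
        intro w hw
        have : dist w x < r := lt_trans (mem_ball.1 hw) hε.2
        have := hcont this
        rw [Real.dist_eq] at this
        rw [Real.norm_eq_abs]
        linarith
      have hsub : (∫ w in ball x ε, (L w - L x)) = (∫ w in ball x ε, L w) - V ε * L x := by
        rw [integral_sub (hintL ε) (integrableOn_const measure_ball_lt_top.ne)]
        rw [setIntegral_const, smul_eq_mul]
        rfl
      have hb : ‖∫ w in ball x ε, (L w - L x)‖ ≤ (δ/2) * V ε :=
        norm_setIntegral_le_of_norm_le_const measure_ball_lt_top hbound
      rw [hsub] at hb
      have heq : Φ₁ ε - L x = (V ε)⁻¹ * ((∫ w in ball x ε, L w) - V ε * L x) := by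
        rw [hΦ₁def]; field_simp
      rw [Real.dist_eq, heq, abs_mul, abs_of_pos (inv_pos.2 hV)]
      calc (V ε)⁻¹ * |(∫ w in ball x ε, L w) - V ε * L x| ≤ (V ε)⁻¹ * ((δ/2) * V ε) := by
            apply mul_le_mul_of_nonneg_left _ (inv_pos.2 hV).le
            rwa [Real.norm_eq_abs] at hb
        _ = δ/2 := by field_simp
        _ < δ := by linarith
    -- limit of Φ₃
    have h3 : Filter.Tendsto Φ₃ l (nhds 0) := by
      have hbnd : ∀ᶠ ε in l, ‖Φ₃ ε‖ ≤ (K : ℝ) * ε := by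
        have hmem : Set.Ioc (0:ℝ) 1 ∈ l := Ioc_mem_nhdsGT_of_mem ⟨le_refl 0, one_pos⟩
        filter_upwards [hmem] with ε hε
        have hV := hVpos ε hε.1
        have hbound : ∀ w ∈ ball x ε, ‖(inner ℝ (gradient L w) (x - w) : ℝ)‖ ≤ (K : ℝ) * ε := by
          intro w hw
          calc ‖(inner ℝ (gradient L w) (x - w) : ℝ)‖ ≤ ‖gradient L w‖ * ‖x - w‖ :=
                norm_inner_le_norm _ _
            _ ≤ (K : ℝ) * ε := by
                apply mul_le_mul (hgbd w (ball_subset_ball hε.2 hw)) _ (norm_nonneg _)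
                  (NNReal.coe_nonneg K)
                rw [← dist_eq_norm, dist_comm]
                exact (mem_ball.1 hw).le
        have hb : ‖∫ w in ball x ε, (inner ℝ (gradient L w) (x - w) : ℝ)‖ ≤ ((K : ℝ) * ε) * V ε :=
          norm_setIntegral_le_of_norm_le_const measure_ball_lt_top hbound
        rw [hΦ₃def]
        simp only [Real.norm_eq_abs, abs_mul, abs_of_pos (inv_pos.2 hV)]
        calc (V ε)⁻¹ * |∫ w in ball x ε, (inner ℝ (gradient L w) (x - w) : ℝ)|
            ≤ (V ε)⁻¹ * (((K : ℝ) * ε) * V ε) := by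
              apply mul_le_mul_of_nonneg_left _ (inv_pos.2 hV).le
              rwa [Real.norm_eq_abs] at hb
          _ = (K : ℝ) * ε := by field_simp
      have hgt : Filter.Tendsto (fun ε : ℝ => (K : ℝ) * ε) l (nhds 0) := by
        have : Filter.Tendsto (fun ε : ℝ => (K : ℝ) * ε) (nhds 0) (nhds ((K : ℝ) * 0)) :=
          (continuous_const.mul continuous_id).tendsto 0
        rw [mul_zero] at this
        exact this.mono_left nhdsWithin_le_nhds
      exact squeeze_zero_norm' hbnd hgt
    -- the eventual inequality
    have hle : ∀ᶠ ε in l, Φ₁ ε + (inner ℝ (Φ₂ ε) (z - x) : ℝ) + Φ₃ ε ≤ L z := by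
      have hmem : Set.Ioc (0:ℝ) 1 ∈ l := Ioc_mem_nhdsGT_of_mem ⟨le_refl 0, one_pos⟩
      filter_upwards [hmem] with ε hε
      have hV := hVpos ε hε.1
      -- pointwise inequality a.e. on the ball
      have hptwise : ∀ᵐ w ∂(volume.restrict (ball x ε)),
          L w + (inner ℝ (gradient L w) (z - x) : ℝ) + (inner ℝ (gradient L w) (x - w) : ℝ) ≤ L z := by
        filter_upwards [ae_restrict_of_ae haed] with w hw
        have := grad_ineq hL hw z
        have hsum : (inner ℝ (gradient L w) (z - x) : ℝ) + (inner ℝ (gradient L w) (x - w) : ℝ)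
            = (inner ℝ (gradient L w) (z - w) : ℝ) := by
          rw [← inner_add_right]
          congr 1
          abel
        linarith [hsum ▸ this]
      have hintsum : IntegrableOn (fun w => L w + (inner ℝ (gradient L w) (z - x) : ℝ)
          + (inner ℝ (gradient L w) (x - w) : ℝ)) (ball x ε) volume :=
        ((hintL ε).add (hint2 ε hε)).add (hint3 ε hε)
      have hkey : (∫ w in ball x ε, (L w + (inner ℝ (gradient L w) (z - x) : ℝ)
          + (inner ℝ (gradient L w) (x - w) : ℝ))) ≤ ∫ _w in ball x ε, L z := by
        apply integral_mono_ae hintsum (integrableOn_const measure_ball_lt_top.ne) hptwise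
      rw [setIntegral_const, smul_eq_mul] at hkey
      have hsplit : (∫ w in ball x ε, (L w + (inner ℝ (gradient L w) (z - x) : ℝ)
          + (inner ℝ (gradient L w) (x - w) : ℝ)))
          = (∫ w in ball x ε, L w) + (inner ℝ (∫ w in ball x ε, gradient L w) (z - x) : ℝ)
            + ∫ w in ball x ε, (inner ℝ (gradient L w) (x - w) : ℝ) := by
        have ia : IntegrableOn (fun w => L w + (inner ℝ (gradient L w) (z - x) : ℝ))
            (ball x ε) volume := (hintL ε).add (hint2 ε hε)
        rw [integral_add ia (hint3 ε hε), integral_add (hintL ε) (hint2 ε hε)]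
        congr 2
        have : (∫ w in ball x ε, (inner ℝ (gradient L w) (z - x) : ℝ))
            = ∫ w in ball x ε, (inner ℝ (z - x) (gradient L w) : ℝ) := by
          congr 1; funext w; rw [real_inner_comm]
        rw [this, integral_inner (hintg ε hε), real_inner_comm]
      rw [hsplit] at hkey
      -- divide by V ε
      have hfinal : Φ₁ ε + (inner ℝ (Φ₂ ε) (z - x) : ℝ) + Φ₃ ε
          = (V ε)⁻¹ * ((∫ w in ball x ε, L w)
            + (inner ℝ (∫ w in ball x ε, gradient L w) (z - x) : ℝ)
            + ∫ w in ball x ε, (inner ℝ (gradient L w) (x - w) : ℝ)) := by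
        rw [hΦ₁def, hΦ₂def, hΦ₃def]
        simp only [real_inner_smul_left]
        ring
      rw [hfinal]
      calc (V ε)⁻¹ * ((∫ w in ball x ε, L w)
            + (inner ℝ (∫ w in ball x ε, gradient L w) (z - x) : ℝ)
            + ∫ w in ball x ε, (inner ℝ (gradient L w) (x - w) : ℝ))
          ≤ (V ε)⁻¹ * (V ε * L z) := by
            apply mul_le_mul_of_nonneg_left hkey (inv_pos.2 hV).le
        _ = L z := by field_simp
    -- conclude
    have htend : Filter.Tendsto (fun ε => Φ₁ ε + (inner ℝ (Φ₂ ε) (z - x) : ℝ) + Φ₃ ε) l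
        (nhds (L x + (inner ℝ (y x) (z - x) : ℝ) + 0)) :=
      (h1.add (h2.inner tendsto_const_nhds)).add h3
    rw [add_zero] at htend
    exact le_of_tendsto htend hle
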